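/- Let κ ∈ ℕ, κ ≥ 1, and define exp₁(τ,T) := exp(−τ/T) and recursively exp_{κ+1}(τ,T) = (2^κ exp_κ(τ,2T) − exp_κ(τ,T))/(2^κ − 1). Then there is a constant C_κ such that for all τ, T > 0: |1 − exp_κ(τ,T)| ≤ C_κ min{(τ/T)^κ, 1} and |∂_τ exp_κ(τ,T)| ≤ C_κ T^{−1} (τ/T)^{κ−1}. -/

import Mathlib

/-- The `κ`-th Richardson extrapolation (in `T`) of the exponential kernel
`exp₁(τ,T) = exp(−τ/T)`, via `exp_{κ+1}(τ,T) = (2^κ exp_κ(τ,2T) − exp_κ(τ,T))/(2^κ − 1)`.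
(The value at `κ = 0` is set to `1` and is not used by the recursion.) -/
noncomputable def expRich : ℕ → ℝ → ℝ → ℝ
  | 0, _, _ => 1
  | 1, τ, T => Real.exp (-τ / T)
  | (n + 2), τ, T =>
      (2 ^ (n + 1) * expRich (n + 1) τ (2 * T) - expRich (n + 1) τ T) / (2 ^ (n + 1) - 1)

open Finset

lemma exp_taylor_bound (n : ℕ) : ∃ K : ℝ, 0 < K ∧ ∀ y : ℝ, 0 ≤ y →
    |Real.exp (-y) - ∑ m ∈ Finset.range n, (-y) ^ m / m.factorial| ≤ K * y ^ n := by
  refine ⟨n + 1, by positivity, fun y hy => ?_⟩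
  rcases le_total y 1 with h1 | h1
  · rcases Nat.eq_zero_or_pos n with rfl | hn
    · simpa [abs_of_pos (Real.exp_pos _)] using Real.exp_le_one_iff.mpr (by linarith : -y ≤ 0)
    · have hb := Real.exp_bound (x := -y) (by rwa [abs_neg, abs_of_nonneg hy]) hn
      have h2 : |(-y)| ^ n = y ^ n := by rw [abs_neg, abs_of_nonneg hy]
      rw [h2] at hb
      refine hb.trans ?_
      have h3 : (1 : ℝ) ≤ (n.factorial : ℝ) * n := by
        have h5 : (1:ℝ) ≤ n.factorial := by exact_mod_cast n.factorial_pos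
        have hn' : (1:ℝ) ≤ n := by exact_mod_cast hn
        nlinarith
      have : ((n.succ : ℝ) / (n.factorial * n)) ≤ (n : ℝ) + 1 := by
        calc ((n.succ : ℝ) / (n.factorial * n)) ≤ (n.succ : ℝ) :=
              div_le_self (by positivity) h3
          _ = (n:ℝ) + 1 := by push_cast; ring
      calc y ^ n * ((n.succ : ℝ) / (n.factorial * n)) ≤ y ^ n * ((n:ℝ)+1) :=
            mul_le_mul_of_nonneg_left this (by positivity)
        _ = ((n:ℝ)+1) * y ^ n := by ring
  · have hyn : (1:ℝ) ≤ y ^ n := one_le_pow₀ h1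
    have hsum : |∑ m ∈ Finset.range n, (-y) ^ m / m.factorial| ≤ (n:ℝ) * y ^ n := by
      refine (Finset.abs_sum_le_sum_abs _ _).trans ?_
      have hterm : ∀ m ∈ Finset.range n, |(-y) ^ m / m.factorial| ≤ y ^ n := by
        intro m hm
        rw [abs_div, abs_pow, abs_neg, abs_of_nonneg hy, Nat.abs_cast]
        have h4 : y ^ m ≤ y ^ n := pow_le_pow_right₀ h1 (Finset.mem_range.mp hm).le
        have h5 : (1:ℝ) ≤ m.factorial := by exact_mod_cast m.factorial_pos
        calc y ^ m / m.factorial ≤ y ^ m / 1 :=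
              div_le_div_of_nonneg_left (by positivity) one_pos h5 |>.trans_eq rfl
          _ = y ^ m := div_one _
          _ ≤ y ^ n := h4
      calc _ ≤ ∑ m ∈ Finset.range n, y ^ n := Finset.sum_le_sum hterm
        _ = (n:ℝ) * y ^ n := by rw [Finset.sum_const, card_range, nsmul_eq_mul]
    have hexp : |Real.exp (-y)| ≤ 1 := by
      rw [abs_of_pos (Real.exp_pos _)]
      exact Real.exp_le_one_iff.mpr (by linarith)
    calc |Real.exp (-y) - _| ≤ |Real.exp (-y)| + |∑ m ∈ Finset.range n, (-y) ^ m / m.factorial| :=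
          abs_sub _ _
      _ ≤ 1 + (n:ℝ) * y ^ n := add_le_add hexp hsum
      _ ≤ ((n:ℝ) + 1) * y ^ n := by nlinarith

lemma expRich_repr (n : ℕ) : ∃ a : ℕ → ℝ,
    (∀ τ T : ℝ, expRich (n + 1) τ T
        = ∑ j ∈ range (n + 1), a j * Real.exp (-(τ * ((2:ℝ) ^ j * T)⁻¹))) ∧
    (∀ m : ℕ, m < n + 1 →
        ∑ j ∈ range (n + 1), a j * ((2:ℝ)⁻¹) ^ (j * m) = if m = 0 then 1 else 0) := by
  induction n with
  | zero =>
      refine ⟨fun _ => 1, fun τ T => ?_, fun m hm => ?_⟩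
      · have : -τ / T = -(τ * ((2:ℝ) ^ 0 * T)⁻¹) := by ring
        simp [expRich, this]
      · interval_cases m; simp
  | succ n ih =>
      obtain ⟨a, hrep, hmom⟩ := ih
      have hD : ((2:ℝ) ^ (n + 1) - 1) ≠ 0 := by
        have : (1:ℝ) < 2 ^ (n+1) := one_lt_pow₀ one_lt_two (Nat.succ_ne_zero n)
        linarith
      set D : ℝ := 2 ^ (n + 1) - 1 with hDdef
      set b : ℕ → ℝ := fun j => (2 ^ (n+1) * (if 1 ≤ j then a (j - 1) else 0)
          - (if j < n + 1 then a j else 0)) / D with hbdef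
      have hsplit : ∀ g : ℕ → ℝ, ∑ j ∈ range (n + 2), b j * g j
          = ((2:ℝ) ^ (n+1) * ∑ j ∈ range (n + 2), (if 1 ≤ j then a (j - 1) else 0) * g j
            - ∑ j ∈ range (n + 2), (if j < n + 1 then a j else 0) * g j) / D := by
        intro g
        calc ∑ j ∈ range (n + 2), b j * g j
            = ∑ j ∈ range (n + 2), ((2:ℝ) ^ (n+1) * ((if 1 ≤ j then a (j - 1) else 0) * g j)
              - (if j < n + 1 then a j else 0) * g j) / D :=
              Finset.sum_congr rfl fun j _ => by simp only [hbdef]; ring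
          _ = (∑ j ∈ range (n + 2), ((2:ℝ) ^ (n+1) * ((if 1 ≤ j then a (j - 1) else 0) * g j)
              - (if j < n + 1 then a j else 0) * g j)) / D := by rw [Finset.sum_div]
          _ = _ := by rw [Finset.sum_sub_distrib, Finset.mul_sum]
      have hAsum : ∀ g : ℕ → ℝ, ∑ j ∈ range (n + 2), (if 1 ≤ j then a (j - 1) else 0) * g j
          = ∑ i ∈ range (n + 1), a i * g (i + 1) := by
        intro g
        rw [Finset.sum_range_succ']
        simp
      have hBsum : ∀ g : ℕ → ℝ, ∑ j ∈ range (n + 2), (if j < n + 1 then a j else 0) * g j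
          = ∑ j ∈ range (n + 1), a j * g j := by
        intro g
        rw [Finset.sum_range_succ]
        have h0 : (if n + 1 < n + 1 then a (n+1) else 0) * g (n+1) = 0 := by simp
        rw [h0, add_zero]
        exact Finset.sum_congr rfl fun j hj => by rw [if_pos (Finset.mem_range.mp hj)]
      refine ⟨b, ?_, ?_⟩
      · intro τ T
        have hun : expRich (n + 2) τ T
            = (2 ^ (n + 1) * expRich (n + 1) τ (2 * T) - expRich (n + 1) τ T) / D := by
          simp [expRich, hDdef]
        rw [hun, hrep τ (2 * T), hrep τ T,
          hsplit (fun j => Real.exp (-(τ * ((2:ℝ) ^ j * T)⁻¹))),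
          hAsum (fun j => Real.exp (-(τ * ((2:ℝ) ^ j * T)⁻¹))),
          hBsum (fun j => Real.exp (-(τ * ((2:ℝ) ^ j * T)⁻¹)))]
        have hsw : ∑ i ∈ range (n + 1), a i * Real.exp (-(τ * ((2:ℝ) ^ (i + 1) * T)⁻¹))
            = ∑ j ∈ range (n + 1), a j * Real.exp (-(τ * ((2:ℝ) ^ j * (2 * T))⁻¹)) :=
          Finset.sum_congr rfl fun i _ => by
            have h2 : ((2:ℝ) ^ (i + 1) * T)⁻¹ = ((2:ℝ) ^ i * (2 * T))⁻¹ := by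
              rw [pow_succ]; ring_nf
            rw [h2]
        rw [hsw]
      · intro m hm
        have key : ∑ j ∈ range (n + 2), b j * ((2:ℝ)⁻¹) ^ (j * m)
            = ((2:ℝ) ^ (n+1) * ((2:ℝ)⁻¹) ^ m - 1)
              * (∑ j ∈ range (n + 1), a j * ((2:ℝ)⁻¹) ^ (j * m)) / D := by
          rw [hsplit (fun j => ((2:ℝ)⁻¹) ^ (j * m)),
            hAsum (fun j => ((2:ℝ)⁻¹) ^ (j * m)),
            hBsum (fun j => ((2:ℝ)⁻¹) ^ (j * m))]
          have : ∑ i ∈ range (n + 1), a i * ((2:ℝ)⁻¹) ^ ((i + 1) * m)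
              = ((2:ℝ)⁻¹) ^ m * ∑ i ∈ range (n + 1), a i * ((2:ℝ)⁻¹) ^ (i * m) := by
            rw [Finset.mul_sum]
            refine Finset.sum_congr rfl fun i _ => ?_
            rw [add_mul, one_mul, pow_add]
            ring
          rw [this]
          ring
        rw [key]
        rcases Nat.eq_zero_or_pos m with rfl | hm0
        · rw [hmom 0 (Nat.succ_pos n)]
          simp only [pow_zero, mul_one, if_pos rfl]
          field_simp
          exact hDdef.symm
        · rcases Nat.lt_or_ge m (n + 1) with hmn | hmn
          · rw [hmom m hmn, if_neg (Nat.pos_iff_ne_zero.mp hm0)]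
            simp
          · have hmeq : m = n + 1 := le_antisymm (Nat.lt_succ_iff.mp hm) hmn
            subst hmeq
            have : (2:ℝ) ^ (n+1) * ((2:ℝ)⁻¹) ^ (n+1) = 1 := by
              rw [inv_pow]
              exact mul_inv_cancel₀ (by positivity)
            rw [this, if_neg (Nat.succ_ne_zero n)]
            simp

/-- For every `κ ≥ 1` there is `C_κ` with
`|1 − exp_κ(τ,T)| ≤ C_κ min{(τ/T)^κ, 1}` and `|∂_τ exp_κ(τ,T)| ≤ C_κ T⁻¹ (τ/T)^{κ−1}`
for all `τ, T > 0`. -/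
theorem stmt_11 (κ : ℕ) (hκ : 1 ≤ κ) :
    ∃ C : ℝ, 0 < C ∧ ∀ τ T : ℝ, 0 < τ → 0 < T →
      |1 - expRich κ τ T| ≤ C * min ((τ / T) ^ κ) 1 ∧
      |deriv (fun τ' => expRich κ τ' T) τ| ≤ C * T⁻¹ * (τ / T) ^ (κ - 1) := by
  obtain ⟨n, rfl⟩ : ∃ n, κ = n + 1 := ⟨κ - 1, (Nat.succ_pred_eq_of_pos hκ).symm⟩
  obtain ⟨a, hrep, hmom⟩ := expRich_repr n
  obtain ⟨K1, hK1, hT1⟩ := exp_taylor_bound (n + 1)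
  obtain ⟨K2, hK2, hT2⟩ := exp_taylor_bound n
  set S : ℝ := ∑ j ∈ range (n + 1), |a j| with hSdef
  have hS : 0 ≤ S := Finset.sum_nonneg fun j _ => abs_nonneg _
  refine ⟨(K1 + K2 + 1) * (S + 1), by positivity, fun τ T hτ hT => ?_⟩
  set x : ℝ := τ / T with hxdef
  have hx : 0 < x := div_pos hτ hT
  have hw0 : ∀ j : ℕ, 0 < ((2:ℝ)⁻¹) ^ j := fun j => by positivity
  have hw1 : ∀ j : ℕ, ((2:ℝ)⁻¹) ^ j ≤ 1 :=
    fun j => pow_le_one₀ (by norm_num) (by norm_num)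
  have hy : ∀ j : ℕ, τ * ((2:ℝ) ^ j * T)⁻¹ = x * ((2:ℝ)⁻¹) ^ j := by
    intro j
    rw [hxdef, mul_inv, inv_pow, div_eq_mul_inv]
    ring
  have hyx0 : ∀ j : ℕ, 0 ≤ x * ((2:ℝ)⁻¹) ^ j := fun j => by positivity
  have hyx : ∀ j : ℕ, x * ((2:ℝ)⁻¹) ^ j ≤ x :=
    fun j => mul_le_of_le_one_right hx.le (hw1 j)
  have hrep' : expRich (n + 1) τ T
      = ∑ j ∈ range (n + 1), a j * Real.exp (-(x * ((2:ℝ)⁻¹) ^ j)) := by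
    rw [hrep]
    exact Finset.sum_congr rfl fun j _ => by rw [hy j]
  -- powers expansion
  have hpow : ∀ (j m : ℕ), (-(x * ((2:ℝ)⁻¹) ^ j)) ^ m = (-x) ^ m * ((2:ℝ)⁻¹) ^ (j * m) := by
    intro j m
    rw [pow_mul, ← mul_pow, neg_mul]
  -- key identity for the value
  have h1 : ∑ j ∈ range (n + 1),
      a j * (∑ m ∈ range (n + 1), (-(x * ((2:ℝ)⁻¹) ^ j)) ^ m / m.factorial) = 1 := by
    calc ∑ j ∈ range (n + 1),
        a j * (∑ m ∈ range (n + 1), (-(x * ((2:ℝ)⁻¹) ^ j)) ^ m / m.factorial)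
        = ∑ j ∈ range (n + 1), ∑ m ∈ range (n + 1),
            ((-x) ^ m / m.factorial) * (a j * ((2:ℝ)⁻¹) ^ (j * m)) := by
          refine Finset.sum_congr rfl fun j _ => ?_
          rw [Finset.mul_sum]
          refine Finset.sum_congr rfl fun m _ => ?_
          rw [hpow j m]; ring
      _ = ∑ m ∈ range (n + 1),
            ((-x) ^ m / m.factorial) * ∑ j ∈ range (n + 1), a j * ((2:ℝ)⁻¹) ^ (j * m) := by
          rw [Finset.sum_comm]
          exact Finset.sum_congr rfl fun m _ => (Finset.mul_sum _ _ _).symm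
      _ = ∑ m ∈ range (n + 1), ((-x) ^ m / m.factorial) * (if m = 0 then 1 else 0) := by
          exact Finset.sum_congr rfl fun m hm => by rw [hmom m (Finset.mem_range.mp hm)]
      _ = 1 := by
          simp [mul_ite, Finset.sum_ite_eq', Finset.mem_range]
  have hval : 1 - expRich (n + 1) τ T = ∑ j ∈ range (n + 1),
      a j * ((∑ m ∈ range (n + 1), (-(x * ((2:ℝ)⁻¹) ^ j)) ^ m / m.factorial)
        - Real.exp (-(x * ((2:ℝ)⁻¹) ^ j))) := by
    calc 1 - expRich (n + 1) τ T
        = ∑ j ∈ range (n + 1),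
            a j * (∑ m ∈ range (n + 1), (-(x * ((2:ℝ)⁻¹) ^ j)) ^ m / m.factorial)
          - ∑ j ∈ range (n + 1), a j * Real.exp (-(x * ((2:ℝ)⁻¹) ^ j)) := by
          rw [hrep', h1]
      _ = _ := by
          rw [← Finset.sum_sub_distrib]
          exact Finset.sum_congr rfl fun j _ => (mul_sub _ _ _).symm
  have hboundA : |1 - expRich (n + 1) τ T| ≤ K1 * S * ((τ/T) ^ (n + 1)) := by
    rw [hval]
    refine (Finset.abs_sum_le_sum_abs _ _).trans ?_
    have hterm : ∀ j ∈ range (n + 1),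
        |a j * ((∑ m ∈ range (n + 1), (-(x * ((2:ℝ)⁻¹) ^ j)) ^ m / m.factorial)
          - Real.exp (-(x * ((2:ℝ)⁻¹) ^ j)))| ≤ |a j| * (K1 * x ^ (n + 1)) := by
      intro j _
      rw [abs_mul]
      refine mul_le_mul_of_nonneg_left ?_ (abs_nonneg _)
      rw [abs_sub_comm]
      refine (hT1 (x * ((2:ℝ)⁻¹) ^ j) (hyx0 j)).trans ?_
      refine mul_le_mul_of_nonneg_left ?_ hK1.le
      exact pow_le_pow_left₀ (hyx0 j) (hyx j) _
    refine (Finset.sum_le_sum hterm).trans ?_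
    refine le_of_eq ?_
    rw [← Finset.sum_mul, ← hSdef]
    ring
  have hboundB : |1 - expRich (n + 1) τ T| ≤ 1 + S := by
    rw [hrep']
    refine (abs_sub _ _).trans ?_
    have h5 : |(1:ℝ)| = 1 := abs_one
    rw [h5]
    refine add_le_add_right ?_ 1
    refine (Finset.abs_sum_le_sum_abs _ _).trans ?_
    refine Finset.sum_le_sum fun j _ => ?_
    rw [abs_mul]
    refine mul_le_of_le_one_right (abs_nonneg _) ?_
    rw [abs_of_pos (Real.exp_pos _)]
    exact Real.exp_le_one_iff.mpr (by simpa using (hyx0 j))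
  -- derivative
  have hder : deriv (fun τ' => expRich (n + 1) τ' T) τ
      = ∑ j ∈ range (n + 1),
          a j * (Real.exp (-(τ * ((2:ℝ) ^ j * T)⁻¹)) * -((2:ℝ) ^ j * T)⁻¹) := by
    have hfun : (fun τ' => expRich (n + 1) τ' T)
        = fun τ' => ∑ j ∈ range (n + 1), a j * Real.exp (-(τ' * ((2:ℝ) ^ j * T)⁻¹)) :=
      funext fun τ' => hrep τ' T
    rw [hfun]
    refine HasDerivAt.deriv ?_
    refine HasDerivAt.fun_sum fun j _ => ?_
    have h0 : HasDerivAt (fun τ' : ℝ => -(τ' * ((2:ℝ) ^ j * T)⁻¹)) (-((2:ℝ) ^ j * T)⁻¹) τ := by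
      simpa using ((hasDerivAt_id τ).mul_const ((2:ℝ) ^ j * T)⁻¹).fun_neg
    exact (h0.exp).const_mul (a j)
  have hc : ∀ j : ℕ, ((2:ℝ) ^ j * T)⁻¹ = T⁻¹ * ((2:ℝ)⁻¹) ^ j := by
    intro j; rw [mul_inv, inv_pow]; ring
  have h2 : ∑ j ∈ range (n + 1), (a j * ((2:ℝ)⁻¹) ^ j)
      * (∑ m ∈ range n, (-(x * ((2:ℝ)⁻¹) ^ j)) ^ m / m.factorial) = 0 := by
    calc ∑ j ∈ range (n + 1), (a j * ((2:ℝ)⁻¹) ^ j)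
        * (∑ m ∈ range n, (-(x * ((2:ℝ)⁻¹) ^ j)) ^ m / m.factorial)
        = ∑ j ∈ range (n + 1), ∑ m ∈ range n,
            ((-x) ^ m / m.factorial) * (a j * ((2:ℝ)⁻¹) ^ (j * (m + 1))) := by
          refine Finset.sum_congr rfl fun j _ => ?_
          rw [Finset.mul_sum]
          refine Finset.sum_congr rfl fun m _ => ?_
          rw [hpow j m, show j * (m + 1) = j * m + j by ring, pow_add]
          ring
      _ = ∑ m ∈ range n, ((-x) ^ m / m.factorial)
            * ∑ j ∈ range (n + 1), a j * ((2:ℝ)⁻¹) ^ (j * (m + 1)) := by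
          rw [Finset.sum_comm]
          exact Finset.sum_congr rfl fun m _ => (Finset.mul_sum _ _ _).symm
      _ = 0 := by
          refine Finset.sum_eq_zero fun m hm => ?_
          rw [hmom (m + 1) (Nat.succ_lt_succ (Finset.mem_range.mp hm)), if_neg (Nat.succ_ne_zero m), mul_zero]
  have hder2 : deriv (fun τ' => expRich (n + 1) τ' T) τ
      = -T⁻¹ * ∑ j ∈ range (n + 1), (a j * ((2:ℝ)⁻¹) ^ j)
          * (Real.exp (-(x * ((2:ℝ)⁻¹) ^ j))
            - ∑ m ∈ range n, (-(x * ((2:ℝ)⁻¹) ^ j)) ^ m / m.factorial) := by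
    rw [hder]
    have hsub : ∑ j ∈ range (n + 1), (a j * ((2:ℝ)⁻¹) ^ j)
        * (Real.exp (-(x * ((2:ℝ)⁻¹) ^ j))
          - ∑ m ∈ range n, (-(x * ((2:ℝ)⁻¹) ^ j)) ^ m / m.factorial)
        = ∑ j ∈ range (n + 1), (a j * ((2:ℝ)⁻¹) ^ j) * Real.exp (-(x * ((2:ℝ)⁻¹) ^ j)) := by
      rw [show (∑ j ∈ range (n + 1), (a j * ((2:ℝ)⁻¹) ^ j)
        * (Real.exp (-(x * ((2:ℝ)⁻¹) ^ j))
          - ∑ m ∈ range n, (-(x * ((2:ℝ)⁻¹) ^ j)) ^ m / m.factorial))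
        = (∑ j ∈ range (n + 1), (a j * ((2:ℝ)⁻¹) ^ j) * Real.exp (-(x * ((2:ℝ)⁻¹) ^ j)))
          - ∑ j ∈ range (n + 1), (a j * ((2:ℝ)⁻¹) ^ j)
            * (∑ m ∈ range n, (-(x * ((2:ℝ)⁻¹) ^ j)) ^ m / m.factorial) from by
          rw [← Finset.sum_sub_distrib]
          exact Finset.sum_congr rfl fun j _ => mul_sub _ _ _]
      rw [h2, sub_zero]
    rw [hsub, Finset.mul_sum]
    refine Finset.sum_congr rfl fun j _ => ?_
    rw [hy j, hc j]
    ring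
  have hboundD : |deriv (fun τ' => expRich (n + 1) τ' T) τ| ≤ K2 * S * (T⁻¹ * x ^ n) := by
    rw [hder2, abs_mul, abs_neg, abs_of_pos (inv_pos.mpr hT)]
    have hsum : |∑ j ∈ range (n + 1), (a j * ((2:ℝ)⁻¹) ^ j)
        * (Real.exp (-(x * ((2:ℝ)⁻¹) ^ j))
          - ∑ m ∈ range n, (-(x * ((2:ℝ)⁻¹) ^ j)) ^ m / m.factorial)| ≤ K2 * S * x ^ n := by
      refine (Finset.abs_sum_le_sum_abs _ _).trans ?_
      have hterm : ∀ j ∈ range (n + 1), |(a j * ((2:ℝ)⁻¹) ^ j)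
          * (Real.exp (-(x * ((2:ℝ)⁻¹) ^ j))
            - ∑ m ∈ range n, (-(x * ((2:ℝ)⁻¹) ^ j)) ^ m / m.factorial)|
          ≤ |a j| * (K2 * x ^ n) := by
        intro j _
        rw [abs_mul, abs_mul, abs_of_pos (hw0 j)]
        have hone : |Real.exp (-(x * ((2:ℝ)⁻¹) ^ j))
            - ∑ m ∈ range n, (-(x * ((2:ℝ)⁻¹) ^ j)) ^ m / m.factorial|
            ≤ K2 * x ^ n := by
          refine (hT2 (x * ((2:ℝ)⁻¹) ^ j) (hyx0 j)).trans ?_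
          refine mul_le_mul_of_nonneg_left ?_ hK2.le
          exact pow_le_pow_left₀ (hyx0 j) (hyx j) _
        calc |a j| * ((2:ℝ)⁻¹) ^ j * |Real.exp (-(x * ((2:ℝ)⁻¹) ^ j))
            - ∑ m ∈ range n, (-(x * ((2:ℝ)⁻¹) ^ j)) ^ m / m.factorial|
            ≤ |a j| * 1 * (K2 * x ^ n) := by
              refine mul_le_mul ?_ hone (abs_nonneg _) (by positivity)
              exact mul_le_mul_of_nonneg_left (hw1 j) (abs_nonneg _)
          _ = |a j| * (K2 * x ^ n) := by ring
      refine (Finset.sum_le_sum hterm).trans ?_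
      refine le_of_eq ?_
      rw [← Finset.sum_mul, ← hSdef]
      ring
    calc T⁻¹ * |∑ j ∈ range (n + 1), (a j * ((2:ℝ)⁻¹) ^ j)
        * (Real.exp (-(x * ((2:ℝ)⁻¹) ^ j))
          - ∑ m ∈ range n, (-(x * ((2:ℝ)⁻¹) ^ j)) ^ m / m.factorial)|
        ≤ T⁻¹ * (K2 * S * x ^ n) := mul_le_mul_of_nonneg_left hsum (by positivity)
      _ = K2 * S * (T⁻¹ * x ^ n) := by ring
  constructor
  · rcases le_total ((τ / T) ^ (n + 1)) 1 with h | h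
    · rw [min_eq_left h]
      refine hboundA.trans ?_
      have hxp : (0:ℝ) ≤ (τ / T) ^ (n + 1) := by positivity
      nlinarith [hK1.le, hK2.le, hS, mul_nonneg hK2.le hS]
    · rw [min_eq_right h]
      refine hboundB.trans ?_
      nlinarith [hK1.le, hK2.le, hS, mul_nonneg hK1.le hS, mul_nonneg hK2.le hS]
  · have hgoal : (n + 1 - 1) = n := by omega
    rw [hgoal]
    refine hboundD.trans ?_
    have hxp : (0:ℝ) ≤ T⁻¹ * x ^ n := by positivity
    have hcoef : K2 * S ≤ (K1 + K2 + 1) * (S + 1) := by nlinarith [hK1.le, hK2.le, hS]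
    calc K2 * S * (T⁻¹ * x ^ n) ≤ (K1 + K2 + 1) * (S + 1) * (T⁻¹ * x ^ n) :=
          mul_le_mul_of_nonneg_right hcoef hxp
      _ = (K1 + K2 + 1) * (S + 1) * T⁻¹ * (τ / T) ^ n := by rw [show (τ/T) = x from rfl]; ring
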